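/- With notation as in the basic construction (functions $A,B,C$ on $[r,u]$ built from $a<b<c$ and positive slopes $\alpha,\beta,\gamma$), suppose additionally that $b/a < c/b$. Then $\max_{q \in [r,u]} A(q)/q = a/r$. -/

import Mathlib

open Set

theorem stmt_2 (a b c α β γ : ℝ) (ha : 0 < a) (hα : 0 < α) (hβ : 0 < β) (hγ : 0 < γ)
    (hab : a < b) (hbc : b < c) (hratio : b / a < c / b)
    (r t u : ℝ)
    (hr : r = a / α + a / β + b / γ)
    (ht : t = a / α + b / β + c / γ) (hu : u = b / α + b / β + c / γ)
    (A : ℝ → ℝ)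
    (hA : ∀ q : ℝ, A q = if q ≤ t then a else a + α * (q - t)) :
    IsGreatest ((fun q => A q / q) '' Icc r u) (a / r) := by
  have hb : 0 < b := ha.trans hab
  have hr0 : 0 < r := by
    rw [hr]; positivity
  have hrt : r < t := by
    rw [hr, ht]
    have h1 : a / β < b / β := by gcongr
    have h2 : b / γ < c / γ := by gcongr
    linarith
  have htu : t < u := by
    rw [ht, hu]
    have h1 : a / α < b / α := by gcongr
    linarith
  have hru : r ≤ u := (hrt.trans htu).le
  have hb2 : b * b < a * c := by
    rw [div_lt_div_iff₀ ha hb] at hratio; linarith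
  have hkey : b * r < a * u := by
    rw [hr, hu]
    have : a * u - b * r = (a * c - b * b) / γ → True := fun _ => trivial
    field_simp
    nlinarith [mul_pos (sub_pos.2 hb2) (show (0:ℝ) < α*β by positivity)]
  have hαr : a < α * r := by
    rw [hr]
    have : α * (a / α) = a := by field_simp
    have h2 : 0 < α * (a / β + b / γ) := by positivity
    rw [mul_add, mul_add] at *
    nlinarith
  have hbu : b = a + α * (u - t) := by
    rw [hu, ht]
    field_simp
    ring
  constructor
  · exact ⟨r, ⟨le_refl r, hru⟩, by show A r / r = a / r; rw [hA]; simp [hrt.le]⟩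
  · rintro x ⟨q, ⟨hq1, hq2⟩, rfl⟩
    have hq0 : 0 < q := lt_of_lt_of_le hr0 hq1
    simp only
    rw [hA, div_le_div_iff₀ hq0 hr0]
    by_cases h : q ≤ t
    · simp only [if_pos h]
      nlinarith
    · simp only [if_neg h]
      push_neg at h
      nlinarith [mul_nonneg (sub_nonneg.2 hq2) (sub_nonneg.2 hαr.le)]
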